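/- arXiv:2312.11127 — 2 statements merged into one kernel-verified Lean document; each statement's English description precedes it below -/
import Mathlib

section
/- The function g(u, v) = u · log(1 + v/u) (natural logarithm) is jointly concave on the open positive quadrant {(u, v) ∈ ℝ² : u > 0, v > 0}. -/
/-- The function `g(u, v) = u · log(1 + v/u)` (natural logarithm) is jointly
concave on the open positive quadrant. -/
theorem g_concave :
    ConcaveOn ℝ {p : ℝ × ℝ | 0 < p.1 ∧ 0 < p.2}
      (fun p : ℝ × ℝ => p.1 * Real.log (1 + p.2 / p.1)) := by
  constructor
  · exact (convex_Ioi (0:ℝ)).prod (convex_Ioi 0)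
  · rintro ⟨u1, v1⟩ ⟨hu1, hv1⟩ ⟨u2, v2⟩ ⟨hu2, hv2⟩ a b ha hb hab
    simp only [Prod.smul_mk, Prod.mk_add_mk, smul_eq_mul]
    set u := a * u1 + b * u2 with hu_def
    have hu : 0 < u := by
      rcases eq_or_lt_of_le ha with h | h
      · have hb' : b = 1 := by linarith
        simp only [hu_def, ← h, hb', zero_mul, one_mul, zero_add]
        exact hu2
      · nlinarith [mul_nonneg hb hu2.le, mul_pos h hu1]
    have hlog := strictConcaveOn_log_Ioi.concaveOn
    have hw1 : 0 ≤ a * u1 / u := by positivity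
    have hw2 : 0 ≤ b * u2 / u := by positivity
    have hsum : a * u1 / u + b * u2 / u = 1 := by field_simp; exact hu_def.symm
    have hx : (1 + v1 / u1) ∈ Set.Ioi (0:ℝ) := by
      have : 0 < v1 / u1 := div_pos hv1 hu1
      simp only [Set.mem_Ioi]; linarith
    have hy : (1 + v2 / u2) ∈ Set.Ioi (0:ℝ) := by
      have : 0 < v2 / u2 := div_pos hv2 hu2
      simp only [Set.mem_Ioi]; linarith
    have key := hlog.2 hx hy hw1 hw2 hsum
    have hcomb : (a*u1/u) • (1 + v1/u1) + (b*u2/u) • (1 + v2/u2)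
        = 1 + (a * v1 + b * v2) / u := by
      simp only [smul_eq_mul]
      field_simp
      ring
    rw [hcomb] at key
    simp only [smul_eq_mul] at key ⊢
    have hmul := mul_le_mul_of_nonneg_left key hu.le
    calc a * (u1 * Real.log (1 + v1 / u1)) + b * (u2 * Real.log (1 + v2 / u2))
        = u * (a * u1 / u * Real.log (1 + v1 / u1)
            + b * u2 / u * Real.log (1 + v2 / u2)) := by
          field_simp
      _ ≤ u * Real.log (1 + (a * v1 + b * v2) / u) := hmul
end

section
/- Let h ∈ ℂ^N, let w, w̄ ∈ ℂ^N, let γ > 0, γ̄ > 0, and let I ≥ 0 be a real number. If the linearized SCA constraint 2·Re((h^H w)·conj(h^H w̄))/γ̄ − γ·|h^H w̄|²/γ̄² ≥ I holds, then the original SINR-type constraint |h^H w|²/γ ≥ I holds; equivalently, |h^H w|² ≥ γ·I. -/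
/-- Every point feasible for the linearized SCA constraint (18) is feasible for the
original SINR-type constraint (17): `|h^H w|²/γ ≥ I`, equivalently `|h^H w|² ≥ γ·I`.
Here `h^H w` is realized as the inner product `⟪h, w⟫` on `EuclideanSpace ℂ (Fin N)`,
which is conjugate-linear in `h`. -/
theorem sca_implies_sinr {N : ℕ} (h w wbar : EuclideanSpace ℂ (Fin N))
    (γ γbar I : ℝ) (hγ : 0 < γ) (hγbar : 0 < γbar) (hI : 0 ≤ I)
    (hlin : 2 * ((inner ℂ h w : ℂ) * (starRingEnd ℂ) (inner ℂ h wbar : ℂ)).re / γbar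
        - γ * ‖(inner ℂ h wbar : ℂ)‖ ^ 2 / γbar ^ 2 ≥ I) :
    ‖(inner ℂ h w : ℂ)‖ ^ 2 / γ ≥ I ∧
      ‖(inner ℂ h w : ℂ)‖ ^ 2 ≥ γ * I := by
  set a : ℂ := inner ℂ h w
  set b : ℂ := inner ℂ h wbar
  have hre : (a * (starRingEnd ℂ) b).re ≤ ‖a‖ * ‖b‖ := by
    calc (a * (starRingEnd ℂ) b).re ≤ ‖a * (starRingEnd ℂ) b‖ :=
          Complex.re_le_norm _
      _ = ‖a‖ * ‖b‖ := by
          rw [norm_mul, Complex.norm_conj]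
  have ha : 0 ≤ ‖a‖ := norm_nonneg a
  have hb : 0 ≤ ‖b‖ := norm_nonneg b
  have key : ‖a‖ ^ 2 / γ ≥ I := by
    have hineq : I ≤ 2 * (‖a‖ * ‖b‖) / γbar
        - γ * ‖b‖ ^ 2 / γbar ^ 2 := by
      have := hlin
      have h2 : 2 * (a * (starRingEnd ℂ) b).re / γbar ≤
          2 * (‖a‖ * ‖b‖) / γbar := by
        gcongr 2 * ?_ / γbar
      linarith
    rw [ge_iff_le, le_div_iff₀ hγ]
    have sq : (γbar * ‖a‖ - γ * ‖b‖) ^ 2 ≥ 0 := sq_nonneg _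
    have hγbar2 : (0:ℝ) < γbar ^ 2 := by positivity
    have hineq' : I * (γ * γbar ^ 2) ≤ (2 * (‖a‖ * ‖b‖) / γbar
        - γ * ‖b‖ ^ 2 / γbar ^ 2) * (γ * γbar ^ 2) := by
      apply mul_le_mul_of_nonneg_right hineq (by positivity)
    have e : (2 * (‖a‖ * ‖b‖) / γbar
        - γ * ‖b‖ ^ 2 / γbar ^ 2) * (γ * γbar ^ 2)
        = 2 * γ * γbar * (‖a‖ * ‖b‖) - γ^2 * ‖b‖ ^ 2 := by
      field_simp
    rw [e] at hineq'
    nlinarith [sq_nonneg (γbar * ‖a‖ - γ * ‖b‖), hγ.le, hγbar.le]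
  refine ⟨key, ?_⟩
  rw [ge_iff_le, le_div_iff₀ hγ] at key
  linarith [key]
end
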